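/- Let ρ ∈ 𝒮(ℝ). Then the Fourier transform (in the tempered distribution sense) of the function s ↦ (ρ(s) − ρ(0))/(i s) is the function r ↦ 2π ρ(0) 𝟙_{r ≥ 0} − ∫_{−∞}^r \hat{ρ}(σ) dσ, where \hat{ρ}(ξ) = ∫_ℝ e^{−i s ξ} ρ(s) ds. -/

import Mathlib

open MeasureTheory Complex Real
open scoped ENNReal

noncomputable section

/-- Fourier transform with the convention `ĥ(ξ) = ∫ e^{−i s ξ} h(s) ds`. -/
def fhat (h : ℝ → ℂ) (ξ : ℝ) : ℂ :=
  ∫ s : ℝ, Complex.exp (-(Complex.I * s * ξ)) * h s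

open scoped FourierTransform
open Set

lemma fhat_eq (h : ℝ → ℂ) (ξ : ℝ) : fhat h ξ = 𝓕 h (ξ / (2 * π)) := by
  unfold fhat
  rw [Real.fourier_real_eq_integral_exp_smul]
  congr 1; ext s
  rw [smul_eq_mul]
  congr 2
  have hπ : (π : ℂ) ≠ 0 := by exact_mod_cast Real.pi_ne_zero
  push_cast
  field_simp

lemma fhat_schwartz (f : SchwartzMap ℝ ℂ) (ξ : ℝ) :
    fhat (fun u => f u) ξ = (SchwartzMap.fourierTransformCLM ℂ f) (ξ / (2 * π)) := by
  rw [fhat_eq, SchwartzMap.fourierTransformCLM_apply]; rfl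

lemma continuous_fhat (f : SchwartzMap ℝ ℂ) : Continuous (fhat (fun u => f u)) := by
  have : fhat (fun u => f u) =
      fun ξ => (SchwartzMap.fourierTransformCLM ℂ f) (ξ / (2 * π)) := funext (fhat_schwartz f)
  rw [this]
  exact (SchwartzMap.fourierTransformCLM ℂ f).continuous.comp (continuous_id.div_const _)

lemma integrable_fhat (f : SchwartzMap ℝ ℂ) : Integrable (fhat (fun u => f u)) := by
  have : fhat (fun u => f u) =
      fun ξ => (SchwartzMap.fourierTransformCLM ℂ f) (ξ / (2 * π)) := funext (fhat_schwartz f)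
  rw [this]
  exact (SchwartzMap.fourierTransformCLM ℂ f).integrable.comp_div (by positivity)

lemma integrable_abs_mul_fhat (f : SchwartzMap ℝ ℂ) :
    Integrable (fun σ => |σ| * ‖fhat (fun u => f u) σ‖) := by
  have h2π : (0:ℝ) < 2 * π := by positivity
  have h1 : Integrable (fun x : ℝ => ‖x‖ ^ 1 * ‖(SchwartzMap.fourierTransformCLM ℂ f) x‖) :=
    (SchwartzMap.fourierTransformCLM ℂ f).integrable_pow_mul volume 1
  have h2 : Integrable (fun σ : ℝ =>
      ‖σ / (2*π)‖ ^ 1 * ‖(SchwartzMap.fourierTransformCLM ℂ f) (σ / (2*π))‖) :=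
    h1.comp_div (ne_of_gt h2π)
  have := h2.const_mul (2 * π)
  apply this.congr
  filter_upwards with σ
  rw [fhat_schwartz]
  rw [pow_one]
  rw [Real.norm_eq_abs, abs_div, abs_of_pos h2π]
  field_simp

lemma integrable_mul_fhat (f : SchwartzMap ℝ ℂ) :
    Integrable (fun σ : ℝ => (σ : ℂ) * fhat (fun u => f u) σ) := by
  refine (integrable_abs_mul_fhat f).mono'
    ((Complex.continuous_ofReal.mul (continuous_fhat f)).aestronglyMeasurable) ?_
  filter_upwards with σ
  simp [abs_of_nonneg]

lemma fhat_total (f : SchwartzMap ℝ ℂ) : ∫ σ : ℝ, fhat (fun u => f u) σ = 2 * π * f 0 := by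
  have h2π : (0:ℝ) < 2 * π := by positivity
  have h1 : (∫ σ : ℝ, fhat (fun u => f u) σ)
      = (2*π) • ∫ v : ℝ, 𝓕 (fun u => f u) v := by
    simp_rw [fhat_eq]
    rw [MeasureTheory.Measure.integral_comp_div (fun v => 𝓕 (fun u => f u) v) (2*π),
      abs_of_pos h2π]
  have h2 : ∫ v : ℝ, 𝓕 (fun u => f u) v = 𝓕⁻ (𝓕 (fun u => f u)) 0 := by
    rw [Real.fourierInv_eq]
    simp
  have h3 : 𝓕⁻ (𝓕 (fun u => f u)) 0 = f 0 := by
    have hint : Integrable (𝓕 (fun u => f u)) := by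
      exact (SchwartzMap.fourierTransformCLM ℂ f).integrable
    exact congrFun (f.continuous.fourierInv_fourier_eq f.integrable hint) 0
  rw [h1, h2, h3, Complex.real_smul]
  push_cast
  ring

lemma norm_exp_I (u s : ℝ) : ‖Complex.exp (-(Complex.I * u * s))‖ = 1 := by
  rw [Complex.norm_exp]
  simp

lemma mult_formula {f g : ℝ → ℂ} (hf : Integrable f) (hg : Integrable g)
    (hfm : Continuous f) (hgm : Continuous g) :
    ∫ s : ℝ, f s * fhat g s = ∫ r : ℝ, fhat f r * g r := by
  have key : Integrable (Function.uncurry fun (s u : ℝ) =>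
      f s * (Complex.exp (-(Complex.I * u * s)) * g u)) (volume.prod volume) := by
    refine (hf.norm.mul_prod hg.norm).mono' ?_ ?_
    · apply Continuous.aestronglyMeasurable
      fun_prop
    · filter_upwards with p
      show ‖f p.1 * (Complex.exp (-(Complex.I * p.2 * p.1)) * g p.2)‖ ≤ ‖f p.1‖ * ‖g p.2‖
      rw [norm_mul, norm_mul, norm_exp_I, one_mul]
  calc ∫ s : ℝ, f s * fhat g s
      = ∫ s : ℝ, ∫ u : ℝ, f s * (Complex.exp (-(Complex.I * u * s)) * g u) := by
        unfold fhat
        simp_rw [MeasureTheory.integral_const_mul]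
    _ = ∫ u : ℝ, ∫ s : ℝ, f s * (Complex.exp (-(Complex.I * u * s)) * g u) := by
        exact MeasureTheory.integral_integral_swap key
    _ = ∫ r : ℝ, fhat f r * g r := by
        unfold fhat
        refine MeasureTheory.integral_congr_ae (Filter.Eventually.of_forall fun u => ?_)
        beta_reduce
        rw [← MeasureTheory.integral_mul_const]
        refine MeasureTheory.integral_congr_ae (Filter.Eventually.of_forall fun s => ?_)
        simp only
        rw [show -(Complex.I * (u:ℂ) * s) = -(Complex.I * (s:ℂ) * u) by ring]
        ring

lemma fhat_scale (h : ℝ → ℂ) {t : ℝ} (ht : 0 < t) (r : ℝ) :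
    fhat (fun s => h (t * s)) r = (t⁻¹ : ℝ) * fhat h (r / t) := by
  unfold fhat
  have : ∀ s : ℝ, Complex.exp (-(Complex.I * s * r)) * h (t * s)
      = (fun u : ℝ => Complex.exp (-(Complex.I * u * (r / t))) * h u) (t * s) := by
    intro s
    simp only
    congr 2
    push_cast
    have ht' : (t : ℂ) ≠ 0 := by exact_mod_cast ht.ne'
    field_simp
  simp_rw [this]
  rw [MeasureTheory.Measure.integral_comp_mul_left
    (fun u : ℝ => Complex.exp (-(Complex.I * u * (r / t))) * h u) t]
  rw [abs_of_pos (inv_pos.mpr ht)]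
  rw [← Complex.real_smul]
  norm_cast

lemma fhat_deriv (ρ : SchwartzMap ℝ ℂ) (ξ : ℝ) :
    fhat (fun u => deriv ρ u) ξ = Complex.I * ξ * fhat (fun u => ρ u) ξ := by
  have hd : Integrable (deriv (fun u => ρ u)) := by
    have : deriv (fun u => ρ u) = fun u => (SchwartzMap.derivCLM ℝ ℂ ρ) u := by
      ext u; rw [SchwartzMap.derivCLM_apply]
    rw [this]
    exact (SchwartzMap.derivCLM ℝ ℂ ρ).integrable
  have h := Real.fourier_deriv ρ.integrable (fun x => ρ.differentiableAt) hd
  rw [fhat_eq, fhat_eq, h]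
  simp only [smul_eq_mul]
  have hπ : (π : ℂ) ≠ 0 := by exact_mod_cast Real.pi_ne_zero
  push_cast
  field_simp

lemma deriv_coe (ρ : SchwartzMap ℝ ℂ) : deriv (fun u => ρ u) = fun u => (SchwartzMap.derivCLM ℝ ℂ ρ) u := by
  ext u; rw [SchwartzMap.derivCLM_apply]

lemma deriv_cont (ρ : SchwartzMap ℝ ℂ) : Continuous (deriv (fun u => ρ u)) := by
  rw [deriv_coe]; exact (SchwartzMap.derivCLM ℝ ℂ ρ).continuous

lemma deriv_int (ρ : SchwartzMap ℝ ℂ) : Integrable (deriv (fun u => ρ u)) := by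
  rw [deriv_coe]; exact (SchwartzMap.derivCLM ℝ ℂ ρ).integrable

lemma step4 (ρ φ : SchwartzMap ℝ ℂ) {t : ℝ} (ht : 0 < t) :
    ∫ s : ℝ, (deriv (fun u => ρ u) (t * s)) * fhat (fun u => φ u) s
      = Complex.I * ∫ r : ℝ, ((r / t^2 : ℝ) : ℂ) * fhat (fun u => ρ u) (r/t) * φ r := by
  have hD : Integrable (fun s => deriv (fun u => ρ u) (t * s)) :=
    (deriv_int ρ).comp_mul_left' ht.ne'
  have hDc : Continuous (fun s => deriv (fun u => ρ u) (t * s)) :=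
    (deriv_cont ρ).comp (continuous_const.mul continuous_id)
  rw [mult_formula hD φ.integrable hDc φ.continuous]
  rw [← MeasureTheory.integral_const_mul]
  refine MeasureTheory.integral_congr_ae (Filter.Eventually.of_forall fun r => ?_)
  beta_reduce
  have h1 : fhat (fun s => deriv (fun u => ρ u) (t * s)) r
      = (t⁻¹ : ℝ) * fhat (deriv (fun u => ρ u)) (r / t) :=
    fhat_scale (deriv (fun u => ρ u)) ht r
  rw [h1, fhat_deriv]
  have ht' : (t : ℂ) ≠ 0 := by exact_mod_cast ht.ne'
  push_cast
  field_simp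

lemma ftc (ρ : SchwartzMap ℝ ℂ) (s : ℝ) :
    (s : ℂ) * ∫ t in Ioc (0:ℝ) 1, deriv (fun u => ρ u) (t * s) = ρ s - ρ 0 := by
  have h : ∀ t ∈ Set.uIcc (0:ℝ) 1,
      HasDerivAt (fun t : ℝ => ρ (t * s)) (s • deriv (fun u => ρ u) (t * s)) t := by
    intro t _
    have h1 : HasDerivAt (fun u => ρ u) (deriv (fun u => ρ u) (t * s)) (t * s) :=
      ρ.differentiableAt.hasDerivAt
    have h2 : HasDerivAt (fun t : ℝ => t * s) s t := by
      simpa using (hasDerivAt_id t).mul_const s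
    have := h1.scomp t h2
    exact this
  have hint : IntervalIntegrable (fun t : ℝ => s • deriv (fun u => ρ u) (t * s)) volume 0 1 :=
    ((by have hc := deriv_cont ρ; fun_prop) :
        Continuous (fun t : ℝ => s • deriv (fun u => ρ u) (t * s))).intervalIntegrable 0 1
  have key := intervalIntegral.integral_eq_sub_of_hasDerivAt h hint
  rw [intervalIntegral.integral_smul] at key
  rw [intervalIntegral.integral_of_le zero_le_one] at key
  rw [← Complex.real_smul]
  rw [key]
  norm_num

lemma hasDeriv_div (r : ℝ) {t : ℝ} (ht : t ≠ 0) : HasDerivAt (fun t : ℝ => r / t) (-(r / t^2)) t := by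
  have h := HasDerivAt.const_mul r (hasDerivAt_inv ht)
  have e : r * -((t:ℝ)^2)⁻¹ = -(r / t^2) := by field_simp
  rw [e] at h
  simpa [div_eq_mul_inv] using h

lemma injOn_div {r : ℝ} (hr : r ≠ 0) : InjOn (fun t : ℝ => r / t) (Ioc 0 1) := by
  intro a ha b hb h
  simp only at h
  rw [div_eq_div_iff ha.1.ne' hb.1.ne'] at h
  exact (mul_left_cancel₀ hr h).symm

lemma image_Ioc_pos {r : ℝ} (hr : 0 < r) : (fun t : ℝ => r / t) '' Ioc (0:ℝ) 1 = Ici r := by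
  ext σ
  constructor
  · rintro ⟨t, ⟨ht0, ht1⟩, rfl⟩
    simp only [mem_Ici]
    rw [le_div_iff₀ ht0]
    nlinarith
  · intro hσ
    rw [mem_Ici] at hσ
    have hσ0 : 0 < σ := lt_of_lt_of_le hr hσ
    exact ⟨r / σ, ⟨div_pos hr hσ0, (div_le_one hσ0).mpr hσ⟩, by field_simp⟩

lemma image_Ioc_neg {r : ℝ} (hr : r < 0) : (fun t : ℝ => r / t) '' Ioc (0:ℝ) 1 = Iic r := by
  ext σ
  constructor
  · rintro ⟨t, ⟨ht0, ht1⟩, rfl⟩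
    simp only [mem_Iic]
    rw [div_le_iff₀ ht0]
    nlinarith
  · intro hσ
    rw [mem_Iic] at hσ
    have hσ0 : σ < 0 := lt_of_le_of_lt hσ hr
    refine ⟨r / σ, ⟨div_pos_of_neg_of_neg hr hσ0, ?_⟩, by
      field_simp
      exact mul_div_cancel_left₀ σ hr.ne⟩
    rw [← neg_div_neg_eq, div_le_one (neg_pos.mpr hσ0)]
    linarith

lemma eval_inner (ρ : SchwartzMap ℝ ℂ) {r : ℝ} (hr : r ≠ 0) :
    ∫ t in Ioc (0:ℝ) 1, ((r / t^2 : ℝ) : ℂ) * fhat (fun u => ρ u) (r / t)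
      = 2 * (π:ℂ) * ρ 0 * (if 0 ≤ r then 1 else 0) - ∫ σ in Iic r, fhat (fun u => ρ u) σ := by
  have hg := integrable_fhat ρ
  have hmeas : MeasurableSet (Ioc (0:ℝ) 1) := measurableSet_Ioc
  have hder : ∀ t ∈ Ioc (0:ℝ) 1,
      HasDerivWithinAt (fun t : ℝ => r / t) (-(r / t^2)) (Ioc 0 1) t :=
    fun t ht => (hasDeriv_div r ht.1.ne').hasDerivWithinAt
  have key := integral_image_eq_integral_abs_deriv_smul hmeas hder (injOn_div hr)
    (fhat (fun u => ρ u))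
  rcases hr.lt_or_gt with hneg | hpos
  · rw [image_Ioc_neg hneg] at key
    have congr1 : (∫ t in Ioc (0:ℝ) 1, |(-(r / t^2))| • fhat (fun u => ρ u) (r/t))
        = ∫ t in Ioc (0:ℝ) 1, -(((r / t^2 : ℝ) : ℂ) * fhat (fun u => ρ u) (r/t)) := by
      refine setIntegral_congr_fun hmeas fun t ht => ?_
      have ht2 : (0:ℝ) < t := ht.1
      have habs : |(-(r / t^2))| = -(r/t^2) :=
        abs_of_nonneg (by rw [← neg_div]; exact div_nonneg (by linarith) (sq_nonneg t))
      rw [habs, neg_smul, ← Complex.real_smul]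
    rw [congr1, integral_neg] at key
    rw [if_neg (not_le.mpr hneg), mul_zero, zero_sub, key, neg_neg]
  · rw [image_Ioc_pos hpos] at key
    have congr1 : (∫ t in Ioc (0:ℝ) 1, |(-(r / t^2))| • fhat (fun u => ρ u) (r/t))
        = ∫ t in Ioc (0:ℝ) 1, ((r / t^2 : ℝ) : ℂ) * fhat (fun u => ρ u) (r/t) := by
      refine setIntegral_congr_fun hmeas fun t ht => ?_
      have ht2 : (0:ℝ) < t := ht.1
      have habs : |(-(r / t^2))| = r/t^2 := by
        rw [abs_neg]; exact abs_of_nonneg (by positivity)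
      rw [habs, ← Complex.real_smul]
    rw [congr1] at key
    rw [if_pos hpos.le, mul_one, ← key, integral_Ici_eq_integral_Ioi]
    have split := intervalIntegral.integral_Iic_add_Ioi (b := r) hg.integrableOn hg.integrableOn
    rw [fhat_total ρ] at split
    linear_combination split

lemma schwartz_bound (f : SchwartzMap ℝ ℂ) : ∃ C : ℝ, 0 ≤ C ∧ ∀ x, ‖f x‖ ≤ C := by
  obtain ⟨C, hC⟩ := f.decay' 0 0
  refine ⟨C, le_trans (norm_nonneg (f 0)) ?_, fun x => ?_⟩
  · have := hC 0
    simp at this; exact this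
  · have := hC x
    simp at this; exact this

lemma swap1 (ρ φ : SchwartzMap ℝ ℂ) :
    ∫ s : ℝ, ∫ t in Ioc (0:ℝ) 1, deriv (fun u => ρ u) (t * s) * fhat (fun u => φ u) s
      = ∫ t in Ioc (0:ℝ) 1, ∫ s : ℝ, deriv (fun u => ρ u) (t * s) * fhat (fun u => φ u) s := by
  apply MeasureTheory.integral_integral_swap
  obtain ⟨C, hC0, hC⟩ := schwartz_bound (SchwartzMap.derivCLM ℝ ℂ ρ)
  have hC' : ∀ x, ‖deriv (fun u => ρ u) x‖ ≤ C := by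
    intro x; rw [deriv_coe]; exact hC x
  have hone : Integrable (fun _ : ℝ => (1:ℝ)) (volume.restrict (Ioc (0:ℝ) 1)) := by
    rw [MeasureTheory.integrable_const_iff]
    right
    exact isFiniteMeasure_restrict.mpr (by simp [Real.volume_Ioc])
  have hbound : Integrable (fun p : ℝ × ℝ => (C * ‖fhat (fun u => φ u) p.1‖) * 1)
      (volume.prod (volume.restrict (Ioc (0:ℝ) 1))) :=
    ((integrable_fhat φ).norm.const_mul C).mul_prod hone
  refine hbound.mono' ?_ ?_
  · apply Continuous.aestronglyMeasurable
    exact ((deriv_cont ρ).comp (continuous_snd.mul continuous_fst)).mul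
      ((continuous_fhat φ).comp continuous_fst)
  · filter_upwards with p
    show ‖deriv (fun u => ρ u) (p.2 * p.1) * fhat (fun u => φ u) p.1‖
      ≤ (C * ‖fhat (fun u => φ u) p.1‖) * 1
    rw [norm_mul, mul_one]
    exact mul_le_mul_of_nonneg_right (hC' _) (norm_nonneg _)

lemma integrable_slice (ρ : SchwartzMap ℝ ℂ) {t : ℝ} (ht : 0 < t) :
    Integrable (fun r : ℝ => ((r / t^2 : ℝ) : ℂ) * fhat (fun u => ρ u) (r / t)) := by
  have base : Integrable (fun r : ℝ => ((r / t : ℝ) : ℂ) * fhat (fun u => ρ u) (r / t)) :=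
    (integrable_mul_fhat ρ).comp_div ht.ne'
  have := base.const_mul ((t⁻¹ : ℝ) : ℂ)
  apply this.congr
  filter_upwards with r
  have ht' : (t : ℂ) ≠ 0 := by exact_mod_cast ht.ne'
  have e : ((t⁻¹ : ℝ) : ℂ) * ((r / t : ℝ) : ℂ) = ((r / t^2 : ℝ) : ℂ) := by
    push_cast
    rw [inv_mul_eq_div, div_div, ← sq]
  rw [← mul_assoc, e]

lemma swap2 (ρ φ : SchwartzMap ℝ ℂ) :
    ∫ t in Ioc (0:ℝ) 1, ∫ r : ℝ, ((r / t^2 : ℝ) : ℂ) * fhat (fun u => ρ u) (r/t) * φ r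
      = ∫ r : ℝ, ∫ t in Ioc (0:ℝ) 1, ((r / t^2 : ℝ) : ℂ) * fhat (fun u => ρ u) (r/t) * φ r := by
  obtain ⟨Cφ, hCφ0, hCφ⟩ := schwartz_bound φ
  have hqint : Integrable (fun σ : ℝ => |σ| * ‖fhat (fun u => ρ u) σ‖) :=
    integrable_abs_mul_fhat ρ
  set K := ∫ σ : ℝ, |σ| * ‖fhat (fun u => ρ u) σ‖ with hK
  apply MeasureTheory.integral_integral_swap
  have hmeas : AEStronglyMeasurable
      (Function.uncurry fun (t r : ℝ) => ((r / t^2 : ℝ) : ℂ) * fhat (fun u => ρ u) (r/t) * φ r)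
      ((volume.restrict (Ioc (0:ℝ) 1)).prod volume) := by
    have hrw : (volume.restrict (Ioc (0:ℝ) 1)).prod (volume : Measure ℝ)
        = (volume.prod volume).restrict ((Ioc (0:ℝ) 1) ×ˢ (univ : Set ℝ)) := by
      rw [← MeasureTheory.Measure.prod_restrict, Measure.restrict_univ]
    rw [hrw]
    refine ContinuousOn.aestronglyMeasurable ?_ (measurableSet_Ioc.prod MeasurableSet.univ)
    have ht0 : ∀ p : ℝ × ℝ, p ∈ (Ioc (0:ℝ) 1) ×ˢ (univ : Set ℝ) → p.1 ≠ 0 :=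
      fun p hp => hp.1.1.ne'
    have c1 : ContinuousOn (fun p : ℝ × ℝ => p.2 / p.1 ^ 2) ((Ioc (0:ℝ) 1) ×ˢ univ) :=
      continuous_snd.continuousOn.div ((continuous_fst.pow 2).continuousOn)
        fun p hp => pow_ne_zero 2 (ht0 p hp)
    have c2 : ContinuousOn (fun p : ℝ × ℝ => p.2 / p.1) ((Ioc (0:ℝ) 1) ×ˢ univ) :=
      continuous_snd.continuousOn.div continuous_fst.continuousOn ht0
    exact ((Complex.continuous_ofReal.comp_continuousOn c1).mul
      ((continuous_fhat ρ).comp_continuousOn c2)).mul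
      (φ.continuous.comp continuous_snd).continuousOn
  rw [MeasureTheory.integrable_prod_iff hmeas]
  constructor
  · rw [ae_restrict_iff' measurableSet_Ioc]
    filter_upwards with t ht
    have base := integrable_slice ρ ht.1
    refine (base.norm.const_mul Cφ).mono' ?_ ?_
    · apply Continuous.aestronglyMeasurable
      refine Continuous.mul (Continuous.mul ?_ ?_) φ.continuous
      · exact Complex.continuous_ofReal.comp ((continuous_id.div_const (t^2)))
      · exact (continuous_fhat ρ).comp (continuous_id.div_const t)
    · filter_upwards with r
      show ‖((r / t^2 : ℝ) : ℂ) * fhat (fun u => ρ u) (r/t) * φ r‖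
        ≤ Cφ * ‖((r / t^2 : ℝ) : ℂ) * fhat (fun u => ρ u) (r/t)‖
      rw [norm_mul, mul_comm Cφ]
      exact mul_le_mul_of_nonneg_left (hCφ r) (norm_nonneg _)
  · have hbd : ∀ᵐ t ∂(volume.restrict (Ioc (0:ℝ) 1)),
        ‖∫ r : ℝ, ‖((r / t^2 : ℝ):ℂ) * fhat (fun u => ρ u) (r/t) * φ r‖‖ ≤ Cφ * K := by
      rw [ae_restrict_iff' measurableSet_Ioc]
      filter_upwards with t ht
      have ht1 : (0:ℝ) < t := ht.1
      have rhs_int : Integrable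
          (fun r : ℝ => Cφ * (t⁻¹ * (|r/t| * ‖fhat (fun u => ρ u) (r/t)‖))) :=
        (((hqint.comp_div ht1.ne').const_mul t⁻¹).const_mul Cφ)
      have mono : (∫ r : ℝ, ‖((r / t^2 : ℝ):ℂ) * fhat (fun u => ρ u) (r/t) * φ r‖)
          ≤ ∫ r : ℝ, Cφ * (t⁻¹ * (|r/t| * ‖fhat (fun u => ρ u) (r/t)‖)) := by
        refine MeasureTheory.integral_mono_of_nonneg
          (Filter.Eventually.of_forall fun r => norm_nonneg _) rhs_int
          (Filter.Eventually.of_forall fun r => ?_)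
        beta_reduce
        rw [norm_mul, norm_mul]
        have e1 : ‖((r / t^2 : ℝ):ℂ)‖ = t⁻¹ * |r/t| := by
          rw [Complex.norm_real, Real.norm_eq_abs, abs_div, abs_div, abs_of_pos ht1,
            abs_of_pos (pow_pos ht1 2)]
          rw [inv_mul_eq_div, div_div, ← sq]
        rw [e1]
        calc (t⁻¹ * |r/t|) * ‖fhat (fun u => ρ u) (r/t)‖ * ‖φ r‖
            ≤ (t⁻¹ * |r/t|) * ‖fhat (fun u => ρ u) (r/t)‖ * Cφ := by
              refine mul_le_mul_of_nonneg_left (hCφ r) ?_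
              positivity
          _ = Cφ * (t⁻¹ * (|r/t| * ‖fhat (fun u => ρ u) (r/t)‖)) := by ring
      have hcv : (∫ r : ℝ, |r/t| * ‖fhat (fun u => ρ u) (r/t)‖) = |t| • K :=
        MeasureTheory.Measure.integral_comp_div
          (fun σ => |σ| * ‖fhat (fun u => ρ u) σ‖) t
      rw [MeasureTheory.integral_const_mul, MeasureTheory.integral_const_mul, hcv,
        smul_eq_mul, abs_of_pos ht1] at mono
      rw [Real.norm_of_nonneg (integral_nonneg fun r => norm_nonneg _)]
      refine le_trans mono ?_
      have : t⁻¹ * (t * K) = K := by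
        field_simp
      rw [this]
    refine Integrable.mono' ?_ hmeas.norm.integral_prod_right' hbd
    have : IntegrableOn (fun _ : ℝ => Cφ * K) (Ioc (0:ℝ) 1) volume := by
      rw [integrableOn_const_iff]
      right
      simp [Real.volume_Ioc]
    exact this

/-- The Fourier transform, in the sense of tempered distributions
(tested against any Schwartz `φ` by duality), of `s ↦ (ρ(s) − ρ(0))/(i s)` is
`r ↦ 2π ρ(0) 𝟙_{r ≥ 0} − ∫_{−∞}^r ρ̂(σ) dσ`. -/
theorem fourier_of_difference_quotient (ρ : SchwartzMap ℝ ℂ) :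
    ∀ φ : SchwartzMap ℝ ℂ,
      (∫ s : ℝ, ((ρ s - ρ 0) / (Complex.I * s)) * fhat (fun u => φ u) s)
        = ∫ r : ℝ, (2 * (π : ℂ) * ρ 0 * (if 0 ≤ r then 1 else 0)
            - ∫ σ in Set.Iic r, fhat (fun u => ρ u) σ) * φ r := by
  intro φ
  have h0 : ∀ᵐ s : ℝ, s ≠ 0 :=
    MeasureTheory.compl_mem_ae_iff.mpr (measure_singleton 0)
  have h2 : ∀ᵐ s : ℝ, ((ρ s - ρ 0) / (Complex.I * s)) * fhat (fun u => φ u) s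
      = Complex.I⁻¹ * ∫ t in Ioc (0:ℝ) 1,
          deriv (fun u => ρ u) (t * s) * fhat (fun u => φ u) s := by
    filter_upwards [h0] with s hs
    have hsne : (s : ℂ) ≠ 0 := by exact_mod_cast hs
    have hA : (∫ t in Ioc (0:ℝ) 1, deriv (fun u => ρ u) (t * s) * fhat (fun u => φ u) s)
        = (∫ t in Ioc (0:ℝ) 1, deriv (fun u => ρ u) (t * s)) * fhat (fun u => φ u) s :=
      MeasureTheory.integral_mul_const _ _
    rw [hA, ← ftc ρ s]
    rw [mul_comm Complex.I, mul_div_mul_left _ _ hsne, div_eq_inv_mul, mul_assoc]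
  rw [MeasureTheory.integral_congr_ae h2, MeasureTheory.integral_const_mul, swap1 ρ φ]
  have h4 : (∫ t in Ioc (0:ℝ) 1, ∫ s : ℝ,
        deriv (fun u => ρ u) (t * s) * fhat (fun u => φ u) s)
      = ∫ t in Ioc (0:ℝ) 1, Complex.I *
          ∫ r : ℝ, ((r / t^2 : ℝ) : ℂ) * fhat (fun u => ρ u) (r/t) * φ r :=
    setIntegral_congr_fun measurableSet_Ioc fun t ht => step4 ρ φ ht.1
  rw [h4, MeasureTheory.integral_const_mul, inv_mul_cancel_left₀ Complex.I_ne_zero, swap2 ρ φ]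
  refine MeasureTheory.integral_congr_ae ?_
  filter_upwards [h0] with r hr
  have hmul : (∫ t in Ioc (0:ℝ) 1, ((r / t^2 : ℝ) : ℂ) * fhat (fun u => ρ u) (r/t) * φ r)
      = (∫ t in Ioc (0:ℝ) 1, ((r / t^2 : ℝ) : ℂ) * fhat (fun u => ρ u) (r/t)) * φ r :=
    MeasureTheory.integral_mul_const _ _
  rw [hmul, eval_inner ρ hr]

end
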